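/- arXiv:2508.00487 — 3 statements merged into one kernel-verified Lean document; each statement's English description precedes it below -/
import Mathlib

section
/- Let V be a finite-dimensional real vector space with dim V = n ≥ 1, let B be a symmetric bilinear form on V, and let τ : V → ℝ be a nonzero linear functional such that B is negative definite on the hyperplane ker τ. Suppose there exists a vector Z ∈ V with B(Z,Z) > 0. Then B is nondegenerate and has Lorentzian signature, i.e. there is a basis e₀,…,e_{n−1} of V with B(e₀,e₀) = 1, B(eᵢ,eᵢ) = −1 for 1 ≤ i ≤ n−1, and B(eᵢ,eⱼ) = 0 for i ≠ j. -/
set_option maxHeartbeats 1000000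
set_option maxRecDepth 8000

/-- Let `V` be a finite-dimensional real vector space with `dim V = n ≥ 1`,
`B` a symmetric bilinear form on `V`, and `τ : V → ℝ` a nonzero linear functional such that
`B` is negative definite on `ker τ`. If there is `Z` with `B Z Z > 0`, then `B` is
nondegenerate and has Lorentzian signature. -/
theorem lorentzian_of_negDef_on_hyperplane_and_timelike_vector
    {V : Type*} [AddCommGroup V] [Module ℝ V] [FiniteDimensional ℝ V]
    (n : ℕ) (hn : 1 ≤ n) (hdim : Module.finrank ℝ V = n)
    (B : V →ₗ[ℝ] V →ₗ[ℝ] ℝ) (hBsymm : ∀ x y : V, B x y = B y x)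
    (τ : V →ₗ[ℝ] ℝ) (hτ : τ ≠ 0)
    (hneg : ∀ x ∈ LinearMap.ker τ, x ≠ 0 → B x x < 0)
    (Z : V) (hZ : 0 < B Z Z) :
    (∀ x : V, (∀ y : V, B x y = 0) → x = 0) ∧
    ∃ e : Module.Basis (Fin n) ℝ V,
      B (e ⟨0, by omega⟩) (e ⟨0, by omega⟩) = 1 ∧
      (∀ i : Fin n, (i : ℕ) ≠ 0 → B (e i) (e i) = -1) ∧
      (∀ i j : Fin n, i ≠ j → B (e i) (e j) = 0) := by
  obtain ⟨m, rfl⟩ : ∃ m, n = m + 1 := ⟨n - 1, by omega⟩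
  set W := LinearMap.ker τ with hWdef
  -- inner product space structure on W given by -B
  letI Wc : InnerProductSpace.Core ℝ W :=
    { inner := fun x y => -(B x y)
      conj_inner_symm := fun x y => by simp [hBsymm (y : V) (x : V)]
      re_inner_nonneg := by
        intro x
        show (0:ℝ) ≤ RCLike.re (-((B (x : V)) (x : V)))
        rw [RCLike.re_to_real]
        rcases eq_or_ne x 0 with h | h
        · rw [h, show (((0 : W)) : V) = (0 : V) from rfl, map_zero]
          norm_num
        · have := hneg (x : V) x.2 (fun hc => h (Subtype.ext hc))
          linarith
      add_left := fun x y z => by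
        show -((B (((x + y : W)) : V)) ((z : W) : V)) =
          -((B ((x : W) : V)) ((z : W) : V)) + -((B ((y : W) : V)) ((z : W) : V))
        rw [show (((x + y : W)) : V) = ((x : W) : V) + ((y : W) : V) from rfl, map_add,
          LinearMap.add_apply]
        ring
      smul_left := fun x y r => by
        show -((B (((r • x : W)) : V)) ((y : W) : V)) =
          (starRingEnd ℝ) r * -((B ((x : W) : V)) ((y : W) : V))
        rw [show (((r • x : W)) : V) = r • ((x : W) : V) from rfl, map_smul,
          LinearMap.smul_apply, smul_eq_mul, RCLike.conj_to_real]
        ring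
      definite := by
        intro x hx
        have hx' : -((B (x : V)) (x : V)) = (0 : ℝ) := hx
        by_contra h
        have := hneg (x : V) x.2 (fun hc => h (Subtype.ext hc))
        linarith }
  letI : NormedAddCommGroup W := Wc.toNormedAddCommGroup
  letI : InnerProductSpace ℝ W := InnerProductSpace.ofCore Wc.toCore
  haveI : CompleteSpace W := FiniteDimensional.complete ℝ W
  have hinner : ∀ x y : W, (inner ℝ x y : ℝ) = -(B x y) := fun x y => rfl
  -- Riesz representation of w ↦ B Z w on W
  set φ₀ : W →ₗ[ℝ] ℝ := (-(B Z)).comp W.subtype with hφ₀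
  set w₀ : W := (InnerProductSpace.toDual ℝ W).symm (LinearMap.toContinuousLinearMap φ₀) with hw₀
  have hw₀spec : ∀ w : W, B (w₀ : V) (w : V) = B Z (w : V) := by
    intro w
    have h := InnerProductSpace.toDual_symm_apply (𝕜 := ℝ) (E := W)
      (x := w) (y := LinearMap.toContinuousLinearMap φ₀)
    rw [hinner] at h
    simp only [LinearMap.coe_toContinuousLinearMap', hφ₀, LinearMap.comp_apply,
      LinearMap.neg_apply, Submodule.coe_subtype] at h
    linarith
  set z' : V := Z - (w₀ : V) with hz'
  have hz'W : ∀ w : W, B z' (w : V) = 0 := by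
    intro w
    simp [hz', hw₀spec w]
  have hτZ : τ Z ≠ 0 := by
    intro h
    have hZ0 : Z ≠ 0 := by
      intro h0; rw [h0] at hZ; simp at hZ
    have := hneg Z (by simpa [hWdef, LinearMap.mem_ker] using h) hZ0
    linarith
  have hτz' : τ z' ≠ 0 := by
    have : τ (w₀ : V) = 0 := w₀.2
    simpa [hz', this] using hτZ
  have hBw₀ : B (w₀ : V) (w₀ : V) ≤ 0 := by
    rcases eq_or_ne ((w₀ : V)) 0 with h | h
    · simp [h]
    · exact le_of_lt (hneg (w₀ : V) w₀.2 h)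
  set c : ℝ := B z' z' with hcdef
  have hc : 0 < c := by
    have h1 : B Z Z = c + B (w₀ : V) (w₀ : V) := by
      have hz'w₀ : B z' (w₀ : V) = 0 := hz'W w₀
      have hw₀z' : B (w₀ : V) z' = 0 := by rw [hBsymm]; exact hz'w₀
      have : Z = z' + (w₀ : V) := by simp [hz']
      rw [this]
      simp [map_add, LinearMap.add_apply, hz'w₀, hw₀z', hcdef]
    linarith
  -- nondegeneracy
  have hnondeg : ∀ x : V, (∀ y : V, B x y = 0) → x = 0 := by
    intro x hx
    set a : ℝ := τ x / τ z' with ha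
    have hwW : x - a • z' ∈ W := by
      rw [hWdef, LinearMap.mem_ker, map_sub, map_smul, smul_eq_mul, ha,
        div_mul_cancel₀ _ hτz', sub_self]
    have hww : B (x - a • z') (x - a • z') = 0 := by
      have h1 : B x (x - a • z') = 0 := hx _
      have h2 : B z' (x - a • z') = 0 := hz'W ⟨_, hwW⟩
      have h3 : B (x - a • z') (x - a • z') =
          B x (x - a • z') - a * B z' (x - a • z') := by
        simp only [map_sub, map_smul, LinearMap.sub_apply, LinearMap.smul_apply, smul_eq_mul]
        rw [hBsymm x z']
        try ring
      rw [h3, h1, h2, mul_zero, sub_zero]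
    have hw0 : x - a • z' = 0 := by
      by_contra h
      have := hneg _ hwW h
      linarith
    have hxa : x = a • z' := by
      have := sub_eq_zero.mp hw0; exact this
    have hac : a * c = 0 := by
      have := hx z'
      rw [hxa] at this
      simpa [map_smul, hcdef] using this
    have ha0 : a = 0 := by
      rcases mul_eq_zero.mp hac with h | h
      · exact h
      · exact absurd h (ne_of_gt hc)
    rw [hxa, ha0, zero_smul]
  refine ⟨hnondeg, ?_⟩
  -- construct the basis
  have hWrank : Module.finrank ℝ W = m := by
    have h := LinearMap.finrank_range_add_finrank_ker τ
    have hrange : LinearMap.range τ = ⊤ := by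
      rw [LinearMap.range_eq_top]
      intro r
      obtain ⟨v, hv⟩ : ∃ v, τ v ≠ 0 := by
        by_contra h
        push_neg at h
        exact hτ (LinearMap.ext fun v => h v)
      exact ⟨(r / τ v) • v, by simp [map_smul, div_mul_cancel₀ _ hv]⟩
    rw [hrange, hdim, ← hWdef] at h
    simp only [finrank_top, Module.finrank_self] at h
    omega
  set ob : OrthonormalBasis (Fin m) ℝ W :=
    (stdOrthonormalBasis ℝ W).reindex (finCongr hWrank) with hob
  have hobortho : ∀ i j : Fin m, B ((ob i : W) : V) ((ob j : W) : V) =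
      if i = j then -1 else 0 := by
    intro i j
    have ho := ob.orthonormal
    rw [orthonormal_iff_ite] at ho
    have h2 := ho i j
    rw [hinner] at h2
    rcases eq_or_ne i j with h | h
    · rw [if_pos h]; rw [if_pos h] at h2; linarith
    · rw [if_neg h]; rw [if_neg h] at h2; linarith
  set e₀ : V := (Real.sqrt c)⁻¹ • z' with he₀
  have hsqrt : Real.sqrt c ≠ 0 := by positivity
  have he₀e₀ : B e₀ e₀ = 1 := by
    have h3 : B e₀ e₀ = (Real.sqrt c)⁻¹ * ((Real.sqrt c)⁻¹ * c) := by
      simp only [he₀, map_smul, LinearMap.smul_apply, smul_eq_mul, ← hcdef]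
    rw [h3, ← mul_assoc, ← mul_inv, Real.mul_self_sqrt hc.le, inv_mul_cancel₀ (ne_of_gt hc)]
  have he₀W : ∀ w : W, B e₀ (w : V) = 0 := by
    intro w
    rw [he₀]
    simp [map_smul, hz'W w]
  set f : Fin (m + 1) → V := Fin.cons e₀ (fun i => ((ob i : W) : V)) with hf
  have hBf : ∀ i j : Fin (m + 1), B (f i) (f j) =
      if i = j then (if (i : ℕ) = 0 then 1 else -1) else 0 := by
    intro i j
    refine Fin.cases ?_ (fun i' => ?_) i
    · refine Fin.cases ?_ (fun j' => ?_) j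
      · simp [hf, he₀e₀]
      · rw [if_neg (Ne.symm (Fin.succ_ne_zero j'))]
        simp only [hf, Fin.cons_zero, Fin.cons_succ]
        exact he₀W _
    · refine Fin.cases ?_ (fun j' => ?_) j
      · rw [if_neg (Fin.succ_ne_zero i')]
        simp only [hf, Fin.cons_zero, Fin.cons_succ]
        rw [hBsymm]
        exact he₀W _
      · simp only [hf, Fin.cons_succ, hobortho, Fin.succ_inj, Fin.val_succ]
        rcases eq_or_ne i' j' with h | h
        · simp [h]
        · simp [h]
  have li : LinearIndependent ℝ f := by
    rw [Fintype.linearIndependent_iff]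
    intro g hg j
    have h := congrArg (fun v => B v (f j)) hg
    simp only [map_sum, map_smul, LinearMap.sum_apply, LinearMap.smul_apply, smul_eq_mul,
      map_zero, LinearMap.zero_apply] at h
    rw [Finset.sum_eq_single j] at h
    · rw [hBf j j, if_pos rfl] at h
      rcases eq_or_ne ((j : ℕ)) 0 with h0 | h0
      · rw [if_pos h0] at h; linarith
      · rw [if_neg h0] at h; linarith
    · intro i _ hij
      rw [hBf i j, if_neg hij, mul_zero]
    · intro hj; exact absurd (Finset.mem_univ j) hj
  have hcard : Fintype.card (Fin (m + 1)) = Module.finrank ℝ V := by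
    simp [hdim]
  set e : Module.Basis (Fin (m + 1)) ℝ V := basisOfLinearIndependentOfCardEqFinrank li hcard with he
  have hecoe : ∀ i, e i = f i := fun i => by
    rw [he, coe_basisOfLinearIndependentOfCardEqFinrank]
  refine ⟨e, ?_, ?_, ?_⟩
  · rw [show (⟨0, by omega⟩ : Fin (m + 1)) = 0 from rfl, hecoe, hBf]
    simp
  · intro i hi
    rw [hecoe, hBf, if_pos rfl, if_neg hi]
  · intro i j hij
    rw [hecoe i, hecoe j, hBf, if_neg hij]
end

section
/- Let H be a complex Hilbert space and let q, r be bounded linear operators on H satisfying q† ∘ q = 1 + r† ∘ r, and suppose q is invertible with bounded inverse. Then ‖q‖ ≥ 1 and the operator norm of r ∘ q⁻¹ satisfies ‖r ∘ q⁻¹‖² ≤ 1 − ‖q‖⁻²; in particular ‖r ∘ q⁻¹‖ < 1. -/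
open ContinuousLinearMap

/-- Let `H` be a complex Hilbert space and `q, r` bounded operators on `H`
with `q† q = 1 + r† r`, and suppose `q` is invertible with bounded inverse `qinv`.
Then `‖q‖ ≥ 1` and `‖r q⁻¹‖² ≤ 1 − ‖q‖⁻²`; in particular `‖r q⁻¹‖ < 1`. -/
theorem norm_r_comp_qinv_lt_one
    {H : Type*} [NormedAddCommGroup H] [InnerProductSpace ℂ H] [CompleteSpace H]
    [Nontrivial H]
    (q r qinv : H →L[ℂ] H)
    (hq : adjoint q * q = 1 + adjoint r * r)
    (hinv₁ : qinv * q = 1) (hinv₂ : q * qinv = 1) :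
    1 ≤ ‖q‖ ∧ ‖r * qinv‖ ^ 2 ≤ 1 - (‖q‖ ^ 2)⁻¹ ∧ ‖r * qinv‖ < 1 := by
  have hkey : ∀ x : H, ‖q x‖ ^ 2 = ‖x‖ ^ 2 + ‖r x‖ ^ 2 := by
    intro x
    have h := ContinuousLinearMap.ext_iff.mp hq x
    have h2 := congrArg (fun y : H => (inner ℂ y x : ℂ)) h
    simp only [ContinuousLinearMap.mul_apply, ContinuousLinearMap.add_apply,
      ContinuousLinearMap.one_apply, inner_add_left,
      ContinuousLinearMap.adjoint_inner_left] at h2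
    rw [inner_self_eq_norm_sq_to_K, inner_self_eq_norm_sq_to_K,
      inner_self_eq_norm_sq_to_K] at h2
    exact_mod_cast h2
  have hle : ∀ x : H, ‖x‖ ≤ ‖q x‖ := by
    intro x
    have h := hkey x
    nlinarith [norm_nonneg (q x), norm_nonneg x, sq_nonneg (‖r x‖)]
  obtain ⟨x₀, hx₀⟩ := exists_ne (0 : H)
  have hq1 : 1 ≤ ‖q‖ := by
    have h1 : ‖x₀‖ ≤ ‖q‖ * ‖x₀‖ := le_trans (hle x₀) (q.le_opNorm x₀)
    have h2 : 0 < ‖x₀‖ := norm_pos_iff.mpr hx₀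
    nlinarith
  have hqpos : (0:ℝ) < ‖q‖ := lt_of_lt_of_le one_pos hq1
  have hq2 : (1:ℝ) ≤ ‖q‖ ^ 2 := by nlinarith
  have hinv1 : (‖q‖ ^ 2)⁻¹ ≤ 1 := by
    rw [inv_le_one_iff₀]; right; exact hq2
  have hcnonneg : 0 ≤ 1 - (‖q‖ ^ 2)⁻¹ := by linarith
  have hptwise : ∀ x : H, ‖(r * qinv) x‖ ^ 2 ≤ (1 - (‖q‖ ^ 2)⁻¹) * ‖x‖ ^ 2 := by
    intro x
    have hqy : q (qinv x) = x := ContinuousLinearMap.ext_iff.mp hinv₂ x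
    have h := hkey (qinv x)
    rw [hqy] at h
    have hxle : ‖x‖ ≤ ‖q‖ * ‖qinv x‖ := by
      calc ‖x‖ = ‖q (qinv x)‖ := by rw [hqy]
        _ ≤ ‖q‖ * ‖qinv x‖ := q.le_opNorm _
    have hsq : ‖x‖ ^ 2 ≤ ‖q‖ ^ 2 * ‖qinv x‖ ^ 2 := by
      nlinarith [norm_nonneg x, norm_nonneg (qinv x)]
    have hinvsq : (‖q‖ ^ 2)⁻¹ * ‖x‖ ^ 2 ≤ ‖qinv x‖ ^ 2 := by
      rw [inv_mul_le_iff₀ (by positivity)]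
      linarith [hsq]
    have : ‖(r * qinv) x‖ ^ 2 = ‖x‖ ^ 2 - ‖qinv x‖ ^ 2 := by
      simp only [ContinuousLinearMap.mul_apply]; linarith
    rw [this]; nlinarith [hinvsq]
  have hKle : ‖r * qinv‖ ≤ Real.sqrt (1 - (‖q‖ ^ 2)⁻¹) := by
    apply ContinuousLinearMap.opNorm_le_bound _ (Real.sqrt_nonneg _)
    intro x
    have h := hptwise x
    have : ‖(r * qinv) x‖ = Real.sqrt (‖(r * qinv) x‖ ^ 2) := by
      rw [Real.sqrt_sq (norm_nonneg _)]
    rw [this]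
    calc Real.sqrt (‖(r * qinv) x‖ ^ 2) ≤ Real.sqrt ((1 - (‖q‖ ^ 2)⁻¹) * ‖x‖ ^ 2) :=
          Real.sqrt_le_sqrt h
      _ = Real.sqrt (1 - (‖q‖ ^ 2)⁻¹) * ‖x‖ := by
          rw [Real.sqrt_mul hcnonneg, Real.sqrt_sq (norm_nonneg x)]
  have hKsq : ‖r * qinv‖ ^ 2 ≤ 1 - (‖q‖ ^ 2)⁻¹ := by
    have := Real.sq_sqrt hcnonneg
    nlinarith [norm_nonneg (r * qinv), Real.sqrt_nonneg (1 - (‖q‖ ^ 2)⁻¹)]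
  have hclt : 1 - (‖q‖ ^ 2)⁻¹ < 1 := by
    have : 0 < (‖q‖ ^ 2)⁻¹ := by positivity
    linarith
  refine ⟨hq1, hKsq, ?_⟩
  nlinarith [norm_nonneg (r * qinv)]
end

section
/- For all natural numbers n, m, k and every real number x with 0 ≤ x < 1, the series over j ∈ ℕ with terms jᵏ · (n + 2j)ᵐ · √((n + 2j)! / n!) · xʲ / (2ʲ · j!) is summable. -/
private lemma fact_add_le_pow_mul (a b : ℕ) :
    Nat.factorial (a + b) ≤ (a + b) ^ a * Nat.factorial b := by
  induction a with
  | zero => simp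
  | succ a ih =>
      have h1 : a + 1 + b = (a + b) + 1 := by omega
      rw [h1, Nat.factorial_succ]
      calc (a + b + 1) * Nat.factorial (a + b)
          ≤ (a + b + 1) * ((a + b) ^ a * Nat.factorial b) :=
            Nat.mul_le_mul_left _ ih
        _ ≤ (a + b + 1) * ((a + b + 1) ^ a * Nat.factorial b) := by
            exact Nat.mul_le_mul_left _ (Nat.mul_le_mul_right _
              (Nat.pow_le_pow_left (Nat.le_succ _) a))
        _ = (a + b + 1) ^ (a + 1) * Nat.factorial b := by ring

private lemma central_choose_le (j : ℕ) : (2 * j).choose j ≤ 4 ^ j := by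
  have h : (2 * j).choose j ≤ ∑ i ∈ Finset.range (2 * j + 1), (2 * j).choose i := by
    apply Finset.single_le_sum (f := fun i => (2 * j).choose i)
    · intro i _; exact Nat.zero_le _
    · simp [Nat.lt_succ_iff]; omega
  calc (2 * j).choose j ≤ 2 ^ (2 * j) := by rwa [Nat.sum_range_choose] at h
    _ = 4 ^ j := by rw [pow_mul]; norm_num

private lemma two_j_fact_le (j : ℕ) :
    Nat.factorial (2 * j) ≤ 4 ^ j * (Nat.factorial j * Nat.factorial j) := by
  have h := Nat.choose_mul_factorial_mul_factorial (show j ≤ 2 * j by omega)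
  have h2 : 2 * j - j = j := by omega
  rw [h2] at h
  calc Nat.factorial (2 * j) = (2 * j).choose j * Nat.factorial j * Nat.factorial j :=
        h.symm
    _ ≤ 4 ^ j * Nat.factorial j * Nat.factorial j :=
        Nat.mul_le_mul_right _ (Nat.mul_le_mul_right _ (central_choose_le j))
    _ = 4 ^ j * (Nat.factorial j * Nat.factorial j) := by ring

/-- For all natural numbers `n, m, k` and every real `x` with `0 ≤ x < 1`,
the series `∑_j jᵏ (n + 2j)ᵐ √((n+2j)!/n!) xʲ / (2ʲ j!)` is summable. -/
theorem summable_fock_exponential_series (n m k : ℕ) (x : ℝ) (hx0 : 0 ≤ x) (hx1 : x < 1) :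
    Summable fun j : ℕ =>
      (j : ℝ) ^ k * ((n : ℝ) + 2 * (j : ℝ)) ^ m *
        Real.sqrt ((Nat.factorial (n + 2 * j) : ℝ) / (Nat.factorial n : ℝ)) *
        x ^ j / ((2 : ℝ) ^ j * (Nat.factorial j : ℝ)) := by
  set K := k + m + n with hK
  have hC : (0:ℝ) ≤ ((n:ℝ) + 2) ^ (m + n) * 2 ^ K := by positivity
  -- the comparison series
  have hsum : Summable fun j : ℕ =>
      ((n:ℝ) + 2) ^ (m + n) * 2 ^ K * (((j:ℝ) ^ K + 1) * x ^ j) := by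
    apply Summable.mul_left
    have h1 : Summable fun j : ℕ => (j:ℝ) ^ K * x ^ j := by
      apply summable_pow_mul_geometric_of_norm_lt_one
      rwa [Real.norm_eq_abs, abs_of_nonneg hx0]
    have h2 : Summable fun j : ℕ => x ^ j := summable_geometric_of_lt_one hx0 hx1
    have := h1.add h2
    exact this.congr (fun j => by ring)
  apply Summable.of_nonneg_of_le _ _ hsum
  · intro j; positivity
  intro j
  set N : ℝ := (n : ℝ) + 2 * (j : ℝ) with hN
  have hN0 : (0:ℝ) ≤ N := by positivity
  have hD : (0:ℝ) < (2:ℝ) ^ j * (Nat.factorial j : ℝ) := by positivity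
  -- key sqrt bound : sqrt((n+2j)!/n!) ≤ N^n * (2^j * j!)
  have hsqrt : Real.sqrt ((Nat.factorial (n + 2 * j) : ℝ) / (Nat.factorial n : ℝ)) ≤
      N ^ n * ((2:ℝ) ^ j * (Nat.factorial j : ℝ)) := by
    rw [Real.sqrt_le_left (by positivity)]
    have hfn : (1:ℝ) ≤ (Nat.factorial n : ℝ) := by
      exact_mod_cast Nat.one_le_iff_ne_zero.mpr (Nat.factorial_ne_zero n)
    have hdiv : (Nat.factorial (n + 2 * j) : ℝ) / (Nat.factorial n : ℝ) ≤
        (Nat.factorial (n + 2 * j) : ℝ) := by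
      rw [div_le_iff₀ (by linarith)]
      have hfp : (0:ℝ) < (Nat.factorial (n + 2 * j) : ℝ) := by exact_mod_cast Nat.factorial_pos _
      nlinarith
    refine hdiv.trans ?_
    have hnat : Nat.factorial (n + 2 * j) ≤
        ((n + 2 * j) ^ n * (n + 2 * j) ^ n) * (4 ^ j * (Nat.factorial j * Nat.factorial j)) := by
      calc Nat.factorial (n + 2 * j) ≤ (n + 2 * j) ^ n * Nat.factorial (2 * j) :=
            fact_add_le_pow_mul n (2 * j)
        _ ≤ (n + 2 * j) ^ n * (4 ^ j * (Nat.factorial j * Nat.factorial j)) :=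
            Nat.mul_le_mul_left _ (two_j_fact_le j)
        _ ≤ ((n + 2 * j) ^ n * (n + 2 * j) ^ n) *
              (4 ^ j * (Nat.factorial j * Nat.factorial j)) := by
            apply Nat.mul_le_mul_right
            have h1 : 1 ≤ (n + 2 * j) ^ n := by
              rcases Nat.eq_zero_or_pos n with h | h
              · simp [h]
              · exact Nat.one_le_pow _ _ (by omega)
            calc (n + 2 * j) ^ n = 1 * (n + 2 * j) ^ n := (one_mul _).symm
              _ ≤ (n + 2 * j) ^ n * (n + 2 * j) ^ n := Nat.mul_le_mul_right _ h1
    have := (Nat.cast_le (α := ℝ)).mpr hnat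
    push_cast at this
    calc (Nat.factorial (n + 2 * j) : ℝ)
        ≤ (((n:ℝ) + 2 * j) ^ n * ((n:ℝ) + 2 * j) ^ n) *
            ((4:ℝ) ^ j * ((Nat.factorial j : ℝ) * (Nat.factorial j : ℝ))) := by
          convert this using 2 <;> push_cast <;> ring
      _ = (N ^ n * ((2:ℝ) ^ j * (Nat.factorial j : ℝ))) ^ 2 := by
          rw [hN]; ring_nf
          rw [show (4:ℝ) ^ j = ((2:ℝ)^j)^2 by rw [← pow_mul, mul_comm, pow_mul]; norm_num]
          ring
      _ = (N ^ n * ((2:ℝ) ^ j * (Nat.factorial j : ℝ))) ^ 2 := rfl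
  -- main chain
  have step1 : (j : ℝ) ^ k * N ^ m *
      Real.sqrt ((Nat.factorial (n + 2 * j) : ℝ) / (Nat.factorial n : ℝ)) *
      x ^ j / ((2 : ℝ) ^ j * (Nat.factorial j : ℝ)) ≤
      (j : ℝ) ^ k * N ^ (m + n) * x ^ j := by
    rw [div_le_iff₀ hD]
    calc (j : ℝ) ^ k * N ^ m *
        Real.sqrt ((Nat.factorial (n + 2 * j) : ℝ) / (Nat.factorial n : ℝ)) * x ^ j
        ≤ (j : ℝ) ^ k * N ^ m * (N ^ n * ((2:ℝ) ^ j * (Nat.factorial j : ℝ))) * x ^ j := by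
          gcongr
      _ = (j : ℝ) ^ k * N ^ (m + n) * x ^ j * ((2:ℝ) ^ j * (Nat.factorial j : ℝ)) := by
          rw [pow_add]; ring
  refine step1.trans ?_
  -- polynomial bound
  have hN2 : N ≤ ((n:ℝ) + 2) * ((j:ℝ) + 1) := by
    rw [hN]; nlinarith [Nat.cast_nonneg (α := ℝ) n, Nat.cast_nonneg (α := ℝ) j]
  have hjk : (j : ℝ) ^ k ≤ ((j:ℝ) + 1) ^ k :=
    pow_le_pow_left₀ (Nat.cast_nonneg j) (by linarith) k
  have hpoly : ((j:ℝ) + 1) ^ K ≤ 2 ^ K * ((j:ℝ) ^ K + 1) := by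
    rcases Nat.eq_zero_or_pos j with h | h
    · subst h
      simp only [Nat.cast_zero]
      have h1 : (0:ℝ) ≤ (0:ℝ) ^ K := by positivity
      have h2 : (0:ℝ) < (2:ℝ) ^ K := by positivity
      have h3 : (1:ℝ) ≤ (2:ℝ) ^ K := one_le_pow₀ (by norm_num)
      calc ((0:ℝ) + 1) ^ K = 1 := by norm_num
        _ ≤ 2 ^ K * ((0:ℝ) ^ K + 1) := by nlinarith
    · have h1 : ((j:ℝ) + 1) ≤ 2 * (j:ℝ) := by
        have : (1:ℝ) ≤ (j:ℝ) := by exact_mod_cast h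
        linarith
      calc ((j:ℝ) + 1) ^ K ≤ (2 * (j:ℝ)) ^ K :=
            pow_le_pow_left₀ (by positivity) h1 K
        _ = 2 ^ K * (j:ℝ) ^ K := mul_pow 2 _ K
        _ ≤ 2 ^ K * ((j:ℝ) ^ K + 1) := by
            have : (0:ℝ) ≤ (2:ℝ) ^ K := by positivity
            nlinarith
  calc (j : ℝ) ^ k * N ^ (m + n) * x ^ j
      ≤ ((j:ℝ) + 1) ^ k * (((n:ℝ) + 2) * ((j:ℝ) + 1)) ^ (m + n) * x ^ j := by
        gcongr
      _ = ((n:ℝ) + 2) ^ (m + n) * (((j:ℝ) + 1) ^ k * ((j:ℝ) + 1) ^ (m + n)) * x ^ j := by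
        rw [mul_pow]; ring
      _ = ((n:ℝ) + 2) ^ (m + n) * ((j:ℝ) + 1) ^ K * x ^ j := by
        rw [hK, ← pow_add, add_assoc]
      _ ≤ ((n:ℝ) + 2) ^ (m + n) * (2 ^ K * ((j:ℝ) ^ K + 1)) * x ^ j := by
        gcongr
      _ = ((n:ℝ) + 2) ^ (m + n) * 2 ^ K * (((j:ℝ) ^ K + 1) * x ^ j) := by ring
end
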